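/- Let ν := gaussianReal 0 1 be the standard Gaussian measure on ℝ, let μ ∈ ℝ, let f : ℝ → ℝ be differentiable with derivative f', and fix ρ₀ ∈ ℝ and δ > 0. Assume: (i) for every ρ with |ρ − ρ₀| < δ, the map ε ↦ f(μ + log(1 + exp(ρ))·ε) is ν-integrable; (ii) there is a ν-integrable function g with |f'(μ + log(1 + exp(ρ))·ε) · ε| ≤ g(ε) for all ρ with |ρ − ρ₀| < δ and ν-almost every ε. Then the function ρ ↦ ∫ f(μ + log(1 + exp(ρ))·ε) dν(ε) has derivative ∫ f'(μ + log(1 + exp(ρ₀))·ε) · ε / (1 + exp(−ρ₀)) dν(ε) at ρ₀. -/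

import Mathlib

open MeasureTheory ProbabilityTheory Real

/-- **Gradient with respect to the standard-deviation parameter `ρ`.**  With
standard Gaussian noise `ε ∼ N(0,1)` and weight sample
`w = μ + log(1 + exp ρ)·ε`, under integrability and a dominated-derivative
condition, `ρ ↦ E_ε[f(μ + log(1 + exp ρ)·ε)]` has derivative
`E_ε[f'(μ + log(1 + exp ρ₀)·ε) · ε / (1 + exp(−ρ₀))]` at `ρ₀`. -/
theorem deriv_rho_of_gaussian_expectation
    (μ : ℝ) (f f' : ℝ → ℝ)
    (hf : ∀ x, HasDerivAt f (f' x) x)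
    (ρ₀ δ : ℝ) (hδ : 0 < δ)
    (h_int : ∀ ρ : ℝ, |ρ - ρ₀| < δ →
      Integrable (fun ε => f (μ + Real.log (1 + Real.exp ρ) * ε)) (gaussianReal 0 1))
    (g : ℝ → ℝ) (hg : Integrable g (gaussianReal 0 1))
    (h_dom : ∀ᵐ ε ∂(gaussianReal 0 1), ∀ ρ : ℝ, |ρ - ρ₀| < δ →
      |f' (μ + Real.log (1 + Real.exp ρ) * ε) * ε| ≤ g ε) :
    HasDerivAt
      (fun ρ => ∫ ε, f (μ + Real.log (1 + Real.exp ρ) * ε) ∂(gaussianReal 0 1))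
      (∫ ε, f' (μ + Real.log (1 + Real.exp ρ₀) * ε) * ε / (1 + Real.exp (-ρ₀))
        ∂(gaussianReal 0 1)) ρ₀ := by
  have hf'eq : f' = deriv f := funext fun x => ((hf x).deriv).symm
  have hmf' : Measurable f' := hf'eq ▸ measurable_deriv f
  set ν := gaussianReal 0 1 with hν
  set F : ℝ → ℝ → ℝ := fun ρ ε => f (μ + Real.log (1 + Real.exp ρ) * ε) with hF
  set F' : ℝ → ℝ → ℝ := fun ρ ε =>
    f' (μ + Real.log (1 + Real.exp ρ) * ε) * ε * (Real.exp ρ / (1 + Real.exp ρ)) with hF'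
  have hball : ∀ ρ : ℝ, ρ ∈ Metric.ball ρ₀ δ ↔ |ρ - ρ₀| < δ := by
    intro ρ; rw [Metric.mem_ball, Real.dist_eq]
  have key := hasDerivAt_integral_of_dominated_loc_of_deriv_le (F := F) (F' := F')
      (x₀ := ρ₀) (bound := g) (μ := ν) (Metric.ball_mem_nhds ρ₀ hδ) ?_ ?_ ?_ ?_ hg ?_
  · have heq : (fun ε => f' (μ + Real.log (1 + Real.exp ρ₀) * ε) * ε / (1 + Real.exp (-ρ₀)))
        = F' ρ₀ := by
      funext ε
      have h1 : (0:ℝ) < 1 + Real.exp ρ₀ := by positivity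
      have h2 : (0:ℝ) < 1 + Real.exp (-ρ₀) := by positivity
      have h3 : Real.exp ρ₀ / (1 + Real.exp ρ₀) = 1 / (1 + Real.exp (-ρ₀)) := by
        rw [div_eq_div_iff h1.ne' h2.ne', one_mul, mul_add, mul_one,
          ← Real.exp_add]
        simp [add_comm]
      simp only [hF', h3]
      ring
    rw [heq]
    exact key.2
  · filter_upwards [Metric.ball_mem_nhds ρ₀ hδ] with ρ hρ
    exact ((h_int ρ ((hball ρ).mp hρ)).aestronglyMeasurable)
  · exact h_int ρ₀ (by simpa using hδ)
  · exact ((hmf'.comp ((measurable_const.add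
      (measurable_const.mul measurable_id)) : Measurable fun ε : ℝ => μ + Real.log (1 + Real.exp ρ₀) * ε)).mul
      measurable_id).mul_const _ |>.aestronglyMeasurable
  · filter_upwards [h_dom] with ε hε ρ hρ
    have hρ' := hε ρ ((hball ρ).mp hρ)
    have h1 : (0:ℝ) < 1 + Real.exp ρ := by positivity
    have ht0 : (0:ℝ) ≤ Real.exp ρ / (1 + Real.exp ρ) := by positivity
    have ht1 : Real.exp ρ / (1 + Real.exp ρ) ≤ 1 := by
      rw [div_le_one h1]; linarith
    have : ‖F' ρ ε‖ = |f' (μ + Real.log (1 + Real.exp ρ) * ε) * ε| *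
        (Real.exp ρ / (1 + Real.exp ρ)) := by
      simp only [hF', Real.norm_eq_abs, abs_mul, abs_of_nonneg ht0]
    rw [this]
    calc |f' (μ + Real.log (1 + Real.exp ρ) * ε) * ε| * (Real.exp ρ / (1 + Real.exp ρ))
        ≤ |f' (μ + Real.log (1 + Real.exp ρ) * ε) * ε| * 1 :=
          mul_le_mul_of_nonneg_left ht1 (abs_nonneg _)
      _ = |f' (μ + Real.log (1 + Real.exp ρ) * ε) * ε| := mul_one _
      _ ≤ g ε := hρ'
  · filter_upwards with ε ρ _
    have h1 : (0:ℝ) < 1 + Real.exp ρ := by positivity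
    have hlog : HasDerivAt (fun ρ : ℝ => Real.log (1 + Real.exp ρ))
        (Real.exp ρ / (1 + Real.exp ρ)) ρ :=
      ((Real.hasDerivAt_exp ρ).const_add 1).log h1.ne'
    have hinner : HasDerivAt (fun ρ : ℝ => μ + Real.log (1 + Real.exp ρ) * ε)
        (Real.exp ρ / (1 + Real.exp ρ) * ε) ρ := (hlog.mul_const ε).const_add μ
    have := (hf (μ + Real.log (1 + Real.exp ρ) * ε)).comp ρ hinner
    refine this.congr_deriv ?_
    show _ = f' (μ + Real.log (1 + Real.exp ρ) * ε) * ε * (Real.exp ρ / (1 + Real.exp ρ)); ring
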